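/- arXiv:1906.08473 — 2 statements merged into one kernel-verified Lean document; each statement's English description precedes it below -/
import Mathlib

section
/- Consider SGD on a twice-differentiable loss $\ell(z;\theta)$ with $\lambda I \prec \nabla_\theta^2 \ell(z;\theta) \prec \Lambda I$ for all $z,\theta$ ($0 < \lambda < \Lambda$), learning rates $\eta_s \le 1/\Lambda$, and counterfactual SGD omitting instance $z_j$ (used at step $\pi(j)$). Define $h_j(a) = \frac{\eta_{\pi(j)}}{|S_{\pi(j)}|} \prod_{s=\pi(j)+1}^{T-1}(1-\eta_s a)\,\|g(z_j;\theta^{[\pi(j)]})\|$. Then the true SGD-influence satisfies $h_j(\Lambda) \le \|\theta_{-j}^{[T]} - \theta^{[T]}\| \le h_j(\lambda)$. -/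
open scoped RealInnerProductSpace
open Finset

/-- Hessian of `f` as the derivative of the gradient. -/
noncomputable def hess {p : ℕ} (f : EuclideanSpace ℝ (Fin p) → ℝ)
    (θ : EuclideanSpace ℝ (Fin p)) :
    EuclideanSpace ℝ (Fin p) →L[ℝ] EuclideanSpace ℝ (Fin p) :=
  fderiv ℝ (gradient f) θ

section Aux

variable {p : ℕ}

theorem my_psd_op_bound (A : EuclideanSpace ℝ (Fin p) →L[ℝ] EuclideanSpace ℝ (Fin p)) (c : ℝ)
    (hsymm : ∀ x y : EuclideanSpace ℝ (Fin p), ⟪A x, y⟫ = ⟪x, A y⟫)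
    (hpos : ∀ v : EuclideanSpace ℝ (Fin p), 0 ≤ ⟪v, A v⟫)
    (hub : ∀ v : EuclideanSpace ℝ (Fin p), ⟪v, A v⟫ ≤ c * ‖v‖ ^ 2)
    (v : EuclideanSpace ℝ (Fin p)) : ‖A v‖ ≤ c * ‖v‖ := by
  rcases eq_or_ne v 0 with rfl | hv
  · simp
  have hv' : (0:ℝ) < ‖v‖ ^ 2 := pow_pos (norm_pos_iff.mpr hv) 2
  have hc : 0 ≤ c := by nlinarith [hpos v, hub v]
  have key : ∀ x y : EuclideanSpace ℝ (Fin p), ⟪x, A y⟫ ^ 2 ≤ ⟪x, A x⟫ * ⟪y, A y⟫ := by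
    intro x y
    have h := discrim_le_zero (a := ⟪y, A y⟫) (b := 2 * ⟪x, A y⟫) (c := ⟪x, A x⟫) ?_
    · rw [discrim] at h; nlinarith [h]
    · intro t
      have hq := hpos (x + t • y)
      have h3 : ⟪y, A x⟫ = ⟪x, A y⟫ := by
        rw [← hsymm x y, real_inner_comm]
      have e1 : ⟪x + t • y, A (x + t • y)⟫
          = ⟪y, A y⟫ * t ^ 2 + 2 * ⟪x, A y⟫ * t + ⟪x, A x⟫ := by
        simp only [map_add, map_smul, inner_add_left, inner_add_right,
          inner_smul_left, inner_smul_right, RCLike.conj_to_real]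
        linear_combination t * h3
      linarith [e1 ▸ hq]
  have h1 : ⟪v, A (A v)⟫ = ‖A v‖ ^ 2 := by
    rw [← hsymm v (A v), real_inner_self_eq_norm_sq]
  have h2 := key v (A v)
  rw [h1] at h2
  have h4 : (‖A v‖ ^ 2) ^ 2 ≤ (c * ‖v‖ ^ 2) * (c * ‖A v‖ ^ 2) := by
    calc (‖A v‖ ^ 2) ^ 2 ≤ ⟪v, A v⟫ * ⟪A v, A (A v)⟫ := h2
    _ ≤ (c * ‖v‖ ^ 2) * (c * ‖A v‖ ^ 2) := by
        apply mul_le_mul (hub v) (hub (A v)) (hpos (A v))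
        positivity
  rcases eq_or_lt_of_le (norm_nonneg (A v)) with h0 | ha
  · rw [← h0]; positivity
  have hsq : ‖A v‖ ^ 2 ≤ (c * ‖v‖) ^ 2 := by nlinarith [h4, mul_pos ha ha]
  exact (pow_le_pow_iff_left₀ (norm_nonneg _) (by positivity) (by norm_num)).mp hsq

theorem my_grad_contDiff {f : EuclideanSpace ℝ (Fin p) → ℝ} (hf : ContDiff ℝ 2 f) :
    ContDiff ℝ 1 (gradient f) := by
  have h1 : ContDiff ℝ 1 (fderiv ℝ f) := hf.fderiv_right (by norm_num)
  exact (InnerProductSpace.toDual ℝ (EuclideanSpace ℝ (Fin p))).symm.contDiff.comp h1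

theorem my_grad_hasFDerivAt {f : EuclideanSpace ℝ (Fin p) → ℝ} (hf : ContDiff ℝ 2 f)
    (x : EuclideanSpace ℝ (Fin p)) : HasFDerivAt (gradient f) (hess f x) x :=
  ((my_grad_contDiff hf).differentiable one_ne_zero x).hasFDerivAt

theorem my_inner_grad_deriv {f : EuclideanSpace ℝ (Fin p) → ℝ} (hf : ContDiff ℝ 2 f)
    (x w v : EuclideanSpace ℝ (Fin p)) :
    ⟪w, hess f x v⟫ = fderiv ℝ (fderiv ℝ f) x v w := by
  have h1 : ContDiff ℝ 1 (fderiv ℝ f) := hf.fderiv_right (by norm_num)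
  have hL : HasFDerivAt (fun y => ⟪w, gradient f y⟫)
      ((innerSL ℝ w).comp (hess f x)) x :=
    (innerSL ℝ w).hasFDerivAt.comp x (my_grad_hasFDerivAt hf x)
  have hR : HasFDerivAt (fun y => ⟪w, gradient f y⟫)
      ((ContinuousLinearMap.apply ℝ ℝ w).comp (fderiv ℝ (fderiv ℝ f) x)) x := by
    have he : (fun y => ⟪w, gradient f y⟫) = fun y => fderiv ℝ f y w := by
      funext y
      rw [real_inner_comm, gradient, InnerProductSpace.toDual_symm_apply]
    rw [he]
    exact (ContinuousLinearMap.apply ℝ ℝ w).hasFDerivAt.comp x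
      ((h1.differentiable one_ne_zero x).hasFDerivAt)
  have := hL.unique hR
  calc ⟪w, hess f x v⟫
      = ((innerSL ℝ w).comp (hess f x)) v := rfl
    _ = ((ContinuousLinearMap.apply ℝ ℝ w).comp (fderiv ℝ (fderiv ℝ f) x)) v := by rw [this]
    _ = fderiv ℝ (fderiv ℝ f) x v w := rfl

theorem my_hess_symm {f : EuclideanSpace ℝ (Fin p) → ℝ} (hf : ContDiff ℝ 2 f)
    (x v w : EuclideanSpace ℝ (Fin p)) :
    ⟪hess f x v, w⟫ = ⟪hess f x w, v⟫ := by
  have hsym := (hf.contDiffAt (x := x)).isSymmSndFDerivAt (by norm_num)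
  calc ⟪hess f x v, w⟫ = ⟪w, hess f x v⟫ := real_inner_comm _ _
    _ = fderiv ℝ (fderiv ℝ f) x v w := my_inner_grad_deriv hf x w v
    _ = fderiv ℝ (fderiv ℝ f) x w v := hsym.eq v w
    _ = ⟪v, hess f x w⟫ := (my_inner_grad_deriv hf x v w).symm
    _ = ⟪hess f x w, v⟫ := real_inner_comm _ _

variable {lam Lam : ℝ}

/-- The gradient is `Lam`-Lipschitz. -/
theorem my_grad_lip {f : EuclideanSpace ℝ (Fin p) → ℝ} (hf : ContDiff ℝ 2 f)
    (hLam : 0 < Lam)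
    (hpos : ∀ θ₀ v : EuclideanSpace ℝ (Fin p), 0 ≤ ⟪v, hess f θ₀ v⟫)
    (hub : ∀ θ₀ v : EuclideanSpace ℝ (Fin p), ⟪v, hess f θ₀ v⟫ ≤ Lam * ‖v‖ ^ 2)
    (x y : EuclideanSpace ℝ (Fin p)) :
    ‖gradient f y - gradient f x‖ ≤ Lam * ‖y - x‖ := by
  apply convex_univ.norm_image_sub_le_of_norm_fderiv_le
    (fun w _ => (my_grad_contDiff hf).differentiable one_ne_zero w)
    (fun w _ => ?_) (Set.mem_univ x) (Set.mem_univ y)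
  exact ContinuousLinearMap.opNorm_le_bound _ hLam.le
    (my_psd_op_bound _ _ (fun a b => (my_hess_symm hf w a b).trans (real_inner_comm _ _))
      (hpos w) (hub w))

/-- The SGD one-sample map is a `(1 - η lam)`-contraction. -/
theorem my_step_contract {f : EuclideanSpace ℝ (Fin p) → ℝ} (hf : ContDiff ℝ 2 f)
    (hlam : 0 < lam) (hlL : lam < Lam) {ηs : ℝ} (hη : 0 < ηs) (hη2 : ηs ≤ 1 / Lam)
    (hlb : ∀ θ₀ v : EuclideanSpace ℝ (Fin p), lam * ‖v‖ ^ 2 ≤ ⟪v, hess f θ₀ v⟫)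
    (hub : ∀ θ₀ v : EuclideanSpace ℝ (Fin p), ⟪v, hess f θ₀ v⟫ ≤ Lam * ‖v‖ ^ 2)
    (x y : EuclideanSpace ℝ (Fin p)) :
    ‖(y - ηs • gradient f y) - (x - ηs • gradient f x)‖ ≤ (1 - ηs * lam) * ‖y - x‖ := by
  have hLam : 0 < Lam := hlam.trans hlL
  have hηL : ηs * Lam ≤ 1 := by
    rw [le_div_iff₀ hLam] at hη2; linarith
  have hK : 0 ≤ 1 - ηs * lam := by nlinarith
  apply convex_univ.norm_image_sub_le_of_norm_fderiv_le (f := fun w => w - ηs • gradient f w)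
    (fun w _ => (differentiable_id.sub
      (((my_grad_contDiff hf).differentiable one_ne_zero).const_smul ηs)) w)
    (fun w _ => ?_) (Set.mem_univ x) (Set.mem_univ y)
  have hd : HasFDerivAt (fun w => w - ηs • gradient f w)
      (ContinuousLinearMap.id ℝ (EuclideanSpace ℝ (Fin p)) - ηs • hess f w) w :=
    (hasFDerivAt_id w).sub ((my_grad_hasFDerivAt hf w).const_smul ηs)
  rw [hd.fderiv]
  apply ContinuousLinearMap.opNorm_le_bound _ hK
  apply my_psd_op_bound
  · intro a b
    simp only [ContinuousLinearMap.sub_apply, ContinuousLinearMap.id_apply,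
      ContinuousLinearMap.smul_apply, inner_sub_left, inner_sub_right,
      inner_smul_left, inner_smul_right, RCLike.conj_to_real]
    rw [my_hess_symm hf w a b, real_inner_comm ((hess f w) b) a]
  · intro v
    simp only [ContinuousLinearMap.sub_apply, ContinuousLinearMap.id_apply,
      ContinuousLinearMap.smul_apply, inner_sub_right, inner_smul_right,
      real_inner_self_eq_norm_sq, RCLike.conj_to_real]
    nlinarith [hub w v, sq_nonneg ‖v‖, hη.le]
  · intro v
    simp only [ContinuousLinearMap.sub_apply, ContinuousLinearMap.id_apply,
      ContinuousLinearMap.smul_apply, inner_sub_right, inner_smul_right,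
      real_inner_self_eq_norm_sq, RCLike.conj_to_real]
    nlinarith [hlb w v, hη.le]

end Aux
/-- Lemma 1, inequality (5): two-sided bound on the norm of the true SGD-influence. -/
theorem sgd_influence_norm_bound {p : ℕ} {Z : Type*}
    (ℓ : Z → EuclideanSpace ℝ (Fin p) → ℝ) (lam Lam : ℝ)
    (hlam : 0 < lam) (hlamLam : lam < Lam)
    (hsmooth : ∀ z, ContDiff ℝ 2 (ℓ z))
    (hHess : ∀ z θ₀ (v : EuclideanSpace ℝ (Fin p)), v ≠ 0 →
      lam * ‖v‖ ^ 2 < ⟪v, hess (ℓ z) θ₀ v⟫ ∧ ⟪v, hess (ℓ z) θ₀ v⟫ < Lam * ‖v‖ ^ 2)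
    (N T : ℕ) (z : Fin N → Z) (S : ℕ → Finset (Fin N)) (η : ℕ → ℝ)
    (hS : ∀ t, (S t).Nonempty)
    (hη : ∀ s, 0 < η s ∧ η s ≤ 1 / Lam)
    (θ θc : ℕ → EuclideanSpace ℝ (Fin p)) (j : Fin N) (π : ℕ)
    (hπT : π < T)
    (honeepoch : ∀ t, j ∈ S t ↔ t = π)
    (hSGD : ∀ t, θ (t + 1) =
      θ t - (η t / (S t).card) • ∑ i ∈ S t, gradient (ℓ (z i)) (θ t))
    (hinit : θc 0 = θ 0)
    (hCF : ∀ t, θc (t + 1) =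
      θc t - (η t / (S t).card) • ∑ i ∈ (S t).erase j, gradient (ℓ (z i)) (θc t)) :
    (η π / (S π).card) * (∏ s ∈ Finset.Ioo π T, (1 - η s * Lam)) *
        ‖gradient (ℓ (z j)) (θ π)‖ ≤ ‖θc T - θ T‖ ∧
    ‖θc T - θ T‖ ≤
      (η π / (S π).card) * (∏ s ∈ Finset.Ioo π T, (1 - η s * lam)) *
        ‖gradient (ℓ (z j)) (θ π)‖ := by
  have hLam : 0 < Lam := hlam.trans hlamLam
  -- non-strict Hessian bounds
  have hlb : ∀ zz θ₀ (v : EuclideanSpace ℝ (Fin p)),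
      lam * ‖v‖ ^ 2 ≤ ⟪v, hess (ℓ zz) θ₀ v⟫ := by
    intro zz θ₀ v
    rcases eq_or_ne v 0 with rfl | hv
    · simp
    · exact (hHess zz θ₀ v hv).1.le
  have hub : ∀ zz θ₀ (v : EuclideanSpace ℝ (Fin p)),
      ⟪v, hess (ℓ zz) θ₀ v⟫ ≤ Lam * ‖v‖ ^ 2 := by
    intro zz θ₀ v
    rcases eq_or_ne v 0 with rfl | hv
    · simp
    · exact (hHess zz θ₀ v hv).2.le
  have hpos : ∀ zz θ₀ (v : EuclideanSpace ℝ (Fin p)),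
      0 ≤ ⟪v, hess (ℓ zz) θ₀ v⟫ := fun zz θ₀ v =>
    le_trans (by positivity) (hlb zz θ₀ v)
  -- factor nonnegativity
  have hfacL : ∀ s, 0 ≤ 1 - η s * Lam := by
    intro s
    have h2 := (hη s).2
    rw [le_div_iff₀ hLam] at h2
    linarith
  have hfacl : ∀ s, 0 ≤ 1 - η s * lam := by
    intro s
    have := hfacL s
    nlinarith [(hη s).1]
  -- trajectories agree up to π
  have hagree : ∀ t, t ≤ π → θc t = θ t := by
    intro t
    induction t with
    | zero => exact fun _ => hinit
    | succ t ih =>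
      intro ht
      have ht' : t ≤ π := le_of_lt (Nat.lt_of_succ_le ht)
      have hj : j ∉ S t := by
        intro h
        have := (honeepoch t).mp h
        omega
      rw [hCF, hSGD, ih ht', Finset.erase_eq_of_notMem hj]
  -- the first influence step
  have hstart : θc (π + 1) - θ (π + 1)
      = (η π / (S π).card) • gradient (ℓ (z j)) (θ π) := by
    rw [hCF, hSGD, hagree π le_rfl]
    have hjS : j ∈ S π := (honeepoch π).mpr rfl
    have hins : S π = insert j ((S π).erase j) := (Finset.insert_erase hjS).symm
    rw [show (∑ i ∈ S π, gradient (ℓ (z i)) (θ π))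
        = gradient (ℓ (z j)) (θ π) + ∑ i ∈ (S π).erase j, gradient (ℓ (z i)) (θ π) by
      rw [hins, Finset.sum_insert (Finset.notMem_erase j _), ← hins]]
    rw [smul_add]
    abel
  -- recursion after π
  have hrec : ∀ t, π < t → θc (t + 1) - θ (t + 1)
      = (θc t - θ t) - (η t / (S t).card) •
          ∑ i ∈ S t, (gradient (ℓ (z i)) (θc t) - gradient (ℓ (z i)) (θ t)) := by
    intro t ht
    have hj : j ∉ S t := by
      intro h
      have := (honeepoch t).mp h
      omega
    rw [hCF, hSGD, Finset.erase_eq_of_notMem hj, Finset.sum_sub_distrib, smul_sub]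
    abel
  -- one-step two-sided bound
  have hstep : ∀ t, π < t →
      (1 - η t * Lam) * ‖θc t - θ t‖ ≤ ‖θc (t + 1) - θ (t + 1)‖ ∧
      ‖θc (t + 1) - θ (t + 1)‖ ≤ (1 - η t * lam) * ‖θc t - θ t‖ := by
    intro t ht
    have hm : (0:ℝ) < ((S t).card : ℝ) := by exact_mod_cast (hS t).card_pos
    constructor
    · -- lower bound
      have hinner : (1 - η t * Lam) * ‖θc t - θ t‖ ^ 2
          ≤ ⟪θc t - θ t, θc (t+1) - θ (t+1)⟫ := by
        rw [hrec t ht, inner_sub_right, inner_smul_right, inner_sum]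
        have hbound : ∀ i ∈ S t,
            ⟪θc t - θ t, gradient (ℓ (z i)) (θc t) - gradient (ℓ (z i)) (θ t)⟫
              ≤ Lam * ‖θc t - θ t‖ ^ 2 := by
          intro i _
          have hlip := my_grad_lip (hsmooth (z i)) hLam (hpos (z i)) (hub (z i)) (θ t) (θc t)
          calc ⟪θc t - θ t, gradient (ℓ (z i)) (θc t) - gradient (ℓ (z i)) (θ t)⟫
              ≤ ‖θc t - θ t‖ * ‖gradient (ℓ (z i)) (θc t) - gradient (ℓ (z i)) (θ t)‖ :=
                real_inner_le_norm _ _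
            _ ≤ ‖θc t - θ t‖ * (Lam * ‖θc t - θ t‖) :=
                mul_le_mul_of_nonneg_left hlip (norm_nonneg _)
            _ = Lam * ‖θc t - θ t‖ ^ 2 := by ring
        have hsum : (∑ i ∈ S t,
            ⟪θc t - θ t, gradient (ℓ (z i)) (θc t) - gradient (ℓ (z i)) (θ t)⟫)
            ≤ ((S t).card : ℝ) * (Lam * ‖θc t - θ t‖ ^ 2) := by
          calc (∑ i ∈ S t,
              ⟪θc t - θ t, gradient (ℓ (z i)) (θc t) - gradient (ℓ (z i)) (θ t)⟫)
              ≤ ∑ _i ∈ S t, Lam * ‖θc t - θ t‖ ^ 2 := Finset.sum_le_sum hbound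
            _ = ((S t).card : ℝ) * (Lam * ‖θc t - θ t‖ ^ 2) := by
                rw [Finset.sum_const, nsmul_eq_mul]
        have hc : 0 ≤ η t / ((S t).card : ℝ) := le_of_lt (div_pos (hη t).1 hm)
        have h5 : (η t / ((S t).card : ℝ)) * (∑ i ∈ S t,
            ⟪θc t - θ t, gradient (ℓ (z i)) (θc t) - gradient (ℓ (z i)) (θ t)⟫)
            ≤ η t * Lam * ‖θc t - θ t‖ ^ 2 := by
          calc (η t / ((S t).card : ℝ)) * (∑ i ∈ S t,
              ⟪θc t - θ t, gradient (ℓ (z i)) (θc t) - gradient (ℓ (z i)) (θ t)⟫)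
              ≤ (η t / ((S t).card : ℝ)) * (((S t).card : ℝ) * (Lam * ‖θc t - θ t‖ ^ 2)) :=
                mul_le_mul_of_nonneg_left hsum hc
            _ = η t * Lam * ‖θc t - θ t‖ ^ 2 := by
                field_simp
        rw [real_inner_self_eq_norm_sq]
        nlinarith [h5]
      have hCS : ⟪θc t - θ t, θc (t+1) - θ (t+1)⟫ ≤ ‖θc t - θ t‖ * ‖θc (t+1) - θ (t+1)‖ :=
        real_inner_le_norm _ _
      rcases eq_or_lt_of_le (norm_nonneg (θc t - θ t)) with h0 | hdpos
      · rw [← h0, mul_zero]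
        exact norm_nonneg _
      · nlinarith [le_trans hinner hCS, hdpos]
    · -- upper bound
      have havg : θc (t + 1) - θ (t + 1) = (((S t).card : ℝ))⁻¹ •
          ∑ i ∈ S t, ((θc t - η t • gradient (ℓ (z i)) (θc t))
            - (θ t - η t • gradient (ℓ (z i)) (θ t))) := by
        rw [hrec t ht]
        have heach : ∀ i : Fin N, ((θc t - η t • gradient (ℓ (z i)) (θc t))
            - (θ t - η t • gradient (ℓ (z i)) (θ t)))
            = (θc t - θ t) - η t • (gradient (ℓ (z i)) (θc t) - gradient (ℓ (z i)) (θ t)) := by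
          intro i
          rw [smul_sub]
          abel
        have hx : ∑ i ∈ S t, ((θc t - θ t)
              - η t • (gradient (ℓ (z i)) (θc t) - gradient (ℓ (z i)) (θ t)))
            = ((S t).card : ℝ) • (θc t - θ t)
              - η t • ∑ i ∈ S t, (gradient (ℓ (z i)) (θc t) - gradient (ℓ (z i)) (θ t)) := by
          rw [Finset.sum_sub_distrib, Finset.sum_const, ← Finset.smul_sum,
            (Nat.cast_smul_eq_nsmul ℝ _ _).symm]
        simp_rw [heach]
        rw [hx, smul_sub, smul_smul, smul_smul, inv_mul_cancel₀ (ne_of_gt hm), one_smul,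
          inv_mul_eq_div]
      rw [havg, norm_smul]
      have h7 : ‖∑ i ∈ S t, ((θc t - η t • gradient (ℓ (z i)) (θc t))
            - (θ t - η t • gradient (ℓ (z i)) (θ t)))‖
          ≤ ((S t).card : ℝ) * ((1 - η t * lam) * ‖θc t - θ t‖) := by
        calc ‖∑ i ∈ S t, ((θc t - η t • gradient (ℓ (z i)) (θc t))
              - (θ t - η t • gradient (ℓ (z i)) (θ t)))‖
            ≤ ∑ i ∈ S t, ‖(θc t - η t • gradient (ℓ (z i)) (θc t))
              - (θ t - η t • gradient (ℓ (z i)) (θ t))‖ := norm_sum_le _ _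
          _ ≤ ∑ _i ∈ S t, (1 - η t * lam) * ‖θc t - θ t‖ := by
              apply Finset.sum_le_sum
              intro i _
              exact my_step_contract (hsmooth (z i)) hlam hlamLam (hη t).1 (hη t).2
                (hlb (z i)) (hub (z i)) (θ t) (θc t)
          _ = ((S t).card : ℝ) * ((1 - η t * lam) * ‖θc t - θ t‖) := by
              rw [Finset.sum_const, nsmul_eq_mul]
      calc ‖(((S t).card : ℝ))⁻¹‖ * ‖∑ i ∈ S t, ((θc t - η t • gradient (ℓ (z i)) (θc t))
            - (θ t - η t • gradient (ℓ (z i)) (θ t)))‖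
          ≤ ‖(((S t).card : ℝ))⁻¹‖ * (((S t).card : ℝ) * ((1 - η t * lam) * ‖θc t - θ t‖)) :=
            mul_le_mul_of_nonneg_left h7 (norm_nonneg _)
        _ = (1 - η t * lam) * ‖θc t - θ t‖ := by
            rw [Real.norm_eq_abs, abs_of_pos (inv_pos.mpr hm)]
            field_simp
  -- main induction
  have main : ∀ t, π < t →
      (η π / (S π).card) * (∏ s ∈ Finset.Ioo π t, (1 - η s * Lam)) *
          ‖gradient (ℓ (z j)) (θ π)‖ ≤ ‖θc t - θ t‖ ∧
      ‖θc t - θ t‖ ≤ (η π / (S π).card) * (∏ s ∈ Finset.Ioo π t, (1 - η s * lam)) *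
          ‖gradient (ℓ (z j)) (θ π)‖ := by
    intro t ht
    induction t, ht using Nat.le_induction with
    | base =>
      have hioo : Finset.Ioo π (π + 1) = ∅ := by
        ext x
        simp only [Finset.mem_Ioo, Finset.notMem_empty, iff_false]
        omega
      have hmπ : (0:ℝ) < ((S π).card : ℝ) := by exact_mod_cast (hS π).card_pos
      have hnorm : ‖θc (π + 1) - θ (π + 1)‖
          = (η π / (S π).card) * ‖gradient (ℓ (z j)) (θ π)‖ := by
        rw [hstart, norm_smul, Real.norm_eq_abs,
          abs_of_pos (div_pos (hη π).1 hmπ)]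
      rw [hioo]
      simp only [Finset.prod_empty, mul_one, one_mul]
      rw [hnorm]
      exact ⟨le_refl _, le_refl _⟩
    | succ t ht ih =>
      have hins : Finset.Ioo π (t + 1) = insert t (Finset.Ioo π t) := by
        ext x
        simp only [Finset.mem_Ioo, Finset.mem_insert]
        omega
      have htIoo : t ∉ Finset.Ioo π t := by simp
      have hPL : (∏ s ∈ Finset.Ioo π (t+1), (1 - η s * Lam))
          = (1 - η t * Lam) * ∏ s ∈ Finset.Ioo π t, (1 - η s * Lam) := by
        rw [hins, Finset.prod_insert htIoo]
      have hPl : (∏ s ∈ Finset.Ioo π (t+1), (1 - η s * lam))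
          = (1 - η t * lam) * ∏ s ∈ Finset.Ioo π t, (1 - η s * lam) := by
        rw [hins, Finset.prod_insert htIoo]
      obtain ⟨hlo, hhi⟩ := ih
      obtain ⟨hslo, hshi⟩ := hstep t ht
      constructor
      · rw [hPL]
        calc (η π / (S π).card) * ((1 - η t * Lam) * ∏ s ∈ Finset.Ioo π t, (1 - η s * Lam)) *
              ‖gradient (ℓ (z j)) (θ π)‖
            = (1 - η t * Lam) * ((η π / (S π).card) *
                (∏ s ∈ Finset.Ioo π t, (1 - η s * Lam)) * ‖gradient (ℓ (z j)) (θ π)‖) := by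
              ring
          _ ≤ (1 - η t * Lam) * ‖θc t - θ t‖ :=
              mul_le_mul_of_nonneg_left hlo (hfacL t)
          _ ≤ ‖θc (t+1) - θ (t+1)‖ := hslo
      · rw [hPl]
        calc ‖θc (t+1) - θ (t+1)‖ ≤ (1 - η t * lam) * ‖θc t - θ t‖ := hshi
          _ ≤ (1 - η t * lam) * ((η π / (S π).card) *
                (∏ s ∈ Finset.Ioo π t, (1 - η s * lam)) * ‖gradient (ℓ (z j)) (θ π)‖) :=
              mul_le_mul_of_nonneg_left hhi (hfacl t)
          _ = (η π / (S π).card) * ((1 - η t * lam) *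
                ∏ s ∈ Finset.Ioo π t, (1 - η s * lam)) * ‖gradient (ℓ (z j)) (θ π)‖ := by
              ring
  exact main T hπT
end

section
/- Under the assumptions of the convex setting ($\lambda I \prec \nabla_\theta^2\ell \prec \Lambda I$, $\eta_s \le 1/\Lambda$), the estimator $\Delta\theta_{-j} = \frac{\eta_{\pi(j)}}{|S_{\pi(j)}|} Z_{T-1}\cdots Z_{\pi(j)+1}\, g(z_j;\theta^{[\pi(j)]})$ with $Z_s = I - \eta_s H^{[s]}$ satisfies $h_j(\Lambda) \le \|\Delta\theta_{-j}\| \le h_j(\lambda)$, where $h_j(a) = \frac{\eta_{\pi(j)}}{|S_{\pi(j)}|}\prod_{s=\pi(j)+1}^{T-1}(1-\eta_s a)\,\|g(z_j;\theta^{[\pi(j)]})\|$. -/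
open scoped RealInnerProductSpace
open Finset

/-- The inner product against the Hessian is given by the second derivative. -/
lemma hess_inner_eq {p : ℕ} (f : EuclideanSpace ℝ (Fin p) → ℝ)
    (θ v x : EuclideanSpace ℝ (Fin p)) :
    ⟪hess f θ v, x⟫ = fderiv ℝ (fderiv ℝ f) θ v x := by
  have hgrad : gradient f =
      (InnerProductSpace.toDual ℝ (EuclideanSpace ℝ (Fin p))).symm ∘ (fderiv ℝ f) := rfl
  rw [hess, hgrad,
    (InnerProductSpace.toDual ℝ (EuclideanSpace ℝ (Fin p))).symm.comp_fderiv]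
  simp only [ContinuousLinearMap.coe_comp', Function.comp_apply,
    LinearIsometryEquiv.coe_toContinuousLinearEquiv, ContinuousLinearEquiv.coe_coe,
    LinearIsometryEquiv.coe_coe]
  exact InnerProductSpace.toDual_symm_apply

/-- The Hessian of a `C²` function is a symmetric operator. -/
lemma hess_symm {p : ℕ} {f : EuclideanSpace ℝ (Fin p) → ℝ} (hf : ContDiff ℝ 2 f)
    (θ u w : EuclideanSpace ℝ (Fin p)) :
    ⟪hess f θ u, w⟫ = ⟪u, hess f θ w⟫ := by
  have hsymm : IsSymmSndFDerivAt ℝ f θ :=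
    hf.contDiffAt.isSymmSndFDerivAt (by norm_num)
  rw [hess_inner_eq, real_inner_comm, hess_inner_eq, hsymm.eq]

/-- A symmetric PSD operator whose quadratic form is bounded by `c ‖·‖²`
has `‖P v‖ ≤ c ‖v‖`. -/
lemma psd_apply_norm_le {p : ℕ}
    (P : EuclideanSpace ℝ (Fin p) →L[ℝ] EuclideanSpace ℝ (Fin p))
    (hsym : ∀ u w, ⟪P u, w⟫ = ⟪u, P w⟫) {c : ℝ} (hc : 0 ≤ c)
    (hpos : ∀ w, 0 ≤ ⟪w, P w⟫) (hub : ∀ w, ⟪w, P w⟫ ≤ c * ‖w‖ ^ 2)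
    (v : EuclideanSpace ℝ (Fin p)) : ‖P v‖ ≤ c * ‖v‖ := by
  set w : EuclideanSpace ℝ (Fin p) := P v with hw
  have key : ∀ t : ℝ, 0 ≤ ⟪w, P w⟫ * (t * t) + (2 * ‖w‖ ^ 2) * t + ⟪v, P v⟫ := by
    intro t
    have h0 := hpos (v + t • w)
    have hexp : ⟪v + t • w, P (v + t • w)⟫ =
        ⟪w, P w⟫ * (t * t) + (2 * ‖w‖ ^ 2) * t + ⟪v, P v⟫ := by
      have h1 : ⟪v, P w⟫ = ‖w‖ ^ 2 := by
        rw [← hsym v w, ← hw, real_inner_self_eq_norm_sq]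
      have h2 : ⟪w, P v⟫ = ‖w‖ ^ 2 := by
        rw [← hw, real_inner_self_eq_norm_sq]
      rw [map_add, map_smul]
      rw [inner_add_left, inner_add_right, inner_add_right,
        real_inner_smul_left, real_inner_smul_left, real_inner_smul_right,
        real_inner_smul_right, h1, h2]
      ring
    rw [hexp] at h0
    exact h0
  have hdisc := discrim_le_zero key
  rw [discrim] at hdisc
  -- hdisc : (2 * ‖w‖^2)^2 - 4 * ⟪w, P w⟫ * ⟪v, P v⟫ ≤ 0
  have hbw := hub w
  have hbv := hub v
  have hpv := hpos v
  have hpw := hpos w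
  have hprod : ⟪w, P w⟫ * ⟪v, P v⟫ ≤ (c * ‖w‖ ^ 2) * (c * ‖v‖ ^ 2) :=
    mul_le_mul hbw hbv hpv (by positivity)
  rcases eq_or_lt_of_le (norm_nonneg w) with h0 | h0
  · rw [hw] at h0
    rw [← h0]
    positivity
  · have h2 : ‖w‖ ^ 2 ≤ (c * ‖v‖) ^ 2 := by nlinarith [mul_pos h0 h0]
    calc ‖P v‖ = Real.sqrt (‖w‖ ^ 2) := by rw [Real.sqrt_sq (norm_nonneg w), hw]
      _ ≤ Real.sqrt ((c * ‖v‖) ^ 2) := Real.sqrt_le_sqrt h2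
      _ = c * ‖v‖ := Real.sqrt_sq (by positivity)

/-- One step of the recursion contracts the norm within the expected rates. -/
lemma step_bound {p : ℕ}
    (A : EuclideanSpace ℝ (Fin p) →L[ℝ] EuclideanSpace ℝ (Fin p))
    (hsym : ∀ u w, ⟪A u, w⟫ = ⟪u, A w⟫)
    {lam Lam η : ℝ} (hlam : 0 < lam) (hlamLam : lam < Lam)
    (hη : 0 < η) (hηL : η ≤ 1 / Lam)
    (hA : ∀ v, lam * ‖v‖ ^ 2 ≤ ⟪v, A v⟫ ∧ ⟪v, A v⟫ ≤ Lam * ‖v‖ ^ 2)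
    (v : EuclideanSpace ℝ (Fin p)) :
    (1 - η * Lam) * ‖v‖ ≤ ‖v - η • A v‖ ∧ ‖v - η • A v‖ ≤ (1 - η * lam) * ‖v‖ := by
  have hLam : 0 < Lam := hlam.trans hlamLam
  have hηLam : η * Lam ≤ 1 := by
    rw [le_div_iff₀ hLam] at hηL; linarith
  have hrate1 : 0 ≤ 1 - η * Lam := by linarith
  have hrate2 : 0 ≤ 1 - η * lam := by nlinarith
  set P : EuclideanSpace ℝ (Fin p) →L[ℝ] EuclideanSpace ℝ (Fin p) :=
    ContinuousLinearMap.id ℝ _ - η • A with hP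
  have hPapp : ∀ u, P u = u - η • A u := by intro u; simp [hP]
  have hPsym : ∀ u w, ⟪P u, w⟫ = ⟪u, P w⟫ := by
    intro u w
    rw [hPapp, hPapp, inner_sub_left, inner_sub_right, real_inner_smul_left,
      real_inner_smul_right, hsym]
  have hPform : ∀ u, ⟪u, P u⟫ = ‖u‖ ^ 2 - η * ⟪u, A u⟫ := by
    intro u
    rw [hPapp, inner_sub_right, real_inner_smul_right, real_inner_self_eq_norm_sq]
  have hPpos : ∀ u, 0 ≤ ⟪u, P u⟫ := by
    intro u
    rw [hPform]
    have := (hA u).2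
    nlinarith [sq_nonneg ‖u‖]
  have hPub : ∀ u, ⟪u, P u⟫ ≤ (1 - η * lam) * ‖u‖ ^ 2 := by
    intro u
    rw [hPform]
    have := (hA u).1
    nlinarith
  constructor
  · -- lower bound
    have hlb : (1 - η * Lam) * ‖v‖ ^ 2 ≤ ⟪v, P v⟫ := by
      rw [hPform]
      have := (hA v).2
      nlinarith
    have hcs : ⟪v, P v⟫ ≤ ‖v‖ * ‖P v‖ := real_inner_le_norm v (P v)
    rw [← hPapp]
    rcases eq_or_ne v 0 with rfl | hv
    · simp
    · have hvpos : 0 < ‖v‖ := norm_pos_iff.mpr hv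
      nlinarith
  · have := psd_apply_norm_le P hPsym hrate2 hPpos hPub v
    rwa [hPapp] at this

/-- Lemma 1, inequality (4): two-sided bound on the norm of the estimator `Δθ_{-j}`,
which is encoded through its defining recursion `Δ (s+1) = Z_s (Δ s)` with
`Z_s = I - η_s H^{[s]}` and `H^{[s]}` the mini-batch Hessian. -/
theorem estimator_norm_bound {p : ℕ} {Z : Type*}
    (ℓ : Z → EuclideanSpace ℝ (Fin p) → ℝ) (lam Lam : ℝ)
    (hlam : 0 < lam) (hlamLam : lam < Lam)
    (hsmooth : ∀ z, ContDiff ℝ 2 (ℓ z))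
    (hHess : ∀ z θ₀ (v : EuclideanSpace ℝ (Fin p)), v ≠ 0 →
      lam * ‖v‖ ^ 2 < ⟪v, hess (ℓ z) θ₀ v⟫ ∧ ⟪v, hess (ℓ z) θ₀ v⟫ < Lam * ‖v‖ ^ 2)
    (N T : ℕ) (z : Fin N → Z) (S : ℕ → Finset (Fin N)) (η : ℕ → ℝ)
    (hS : ∀ t, (S t).Nonempty)
    (hη : ∀ s, 0 < η s ∧ η s ≤ 1 / Lam)
    (θ : ℕ → EuclideanSpace ℝ (Fin p)) (j : Fin N) (π : ℕ)
    (hπT : π < T) (hjS : j ∈ S π)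
    (hSGD : ∀ t, θ (t + 1) =
      θ t - (η t / (S t).card) • ∑ i ∈ S t, gradient (ℓ (z i)) (θ t))
    (Δ : ℕ → EuclideanSpace ℝ (Fin p))
    (hΔinit : Δ (π + 1) = (η π / (S π).card) • gradient (ℓ (z j)) (θ π))
    (hΔrec : ∀ s, π < s → Δ (s + 1) =
      Δ s - η s • ((((S s).card : ℝ)⁻¹ • ∑ i ∈ S s, hess (ℓ (z i)) (θ s)) (Δ s))) :
    (η π / (S π).card) * (∏ s ∈ Finset.Ioo π T, (1 - η s * Lam)) *
        ‖gradient (ℓ (z j)) (θ π)‖ ≤ ‖Δ T‖ ∧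
    ‖Δ T‖ ≤
      (η π / (S π).card) * (∏ s ∈ Finset.Ioo π T, (1 - η s * lam)) *
        ‖gradient (ℓ (z j)) (θ π)‖ := by
  have hLam : 0 < Lam := hlam.trans hlamLam
  have hc0 : 0 < η π / ((S π).card : ℝ) := by
    apply div_pos (hη π).1
    exact_mod_cast (hS π).card_pos
  -- properties of the averaged Hessian at any step s
  set A : ℕ → EuclideanSpace ℝ (Fin p) →L[ℝ] EuclideanSpace ℝ (Fin p) :=
    fun s => (((S s).card : ℝ)⁻¹ • ∑ i ∈ S s, hess (ℓ (z i)) (θ s)) with hAdef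
  have hAsym : ∀ s u w, ⟪A s u, w⟫ = ⟪u, A s w⟫ := by
    intro s u w
    simp only [hAdef, ContinuousLinearMap.coe_smul', Pi.smul_apply,
      ContinuousLinearMap.coe_sum', Finset.sum_apply]
    rw [real_inner_smul_left, real_inner_smul_right, inner_sum, sum_inner]
    congr 1
    exact Finset.sum_congr rfl fun i _ => hess_symm (hsmooth (z i)) (θ s) u w
  have hAform : ∀ s v, lam * ‖v‖ ^ 2 ≤ ⟪v, A s v⟫ ∧ ⟪v, A s v⟫ ≤ Lam * ‖v‖ ^ 2 := by
    intro s v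
    rcases eq_or_ne v 0 with rfl | hv
    · simp
    · have hcard : (0 : ℝ) < ((S s).card : ℝ) := by exact_mod_cast (hS s).card_pos
      have hform : ⟪v, A s v⟫ =
          (((S s).card : ℝ))⁻¹ * ∑ i ∈ S s, ⟪v, hess (ℓ (z i)) (θ s) v⟫ := by
        simp only [hAdef, ContinuousLinearMap.coe_smul', Pi.smul_apply,
          ContinuousLinearMap.coe_sum', Finset.sum_apply]
        rw [real_inner_smul_right, inner_sum]
      constructor
      · rw [hform, le_inv_mul_iff₀ hcard]
        calc ((S s).card : ℝ) * (lam * ‖v‖ ^ 2)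
            = ∑ _i ∈ S s, lam * ‖v‖ ^ 2 := by rw [Finset.sum_const, nsmul_eq_mul]
          _ ≤ ∑ i ∈ S s, ⟪v, hess (ℓ (z i)) (θ s) v⟫ :=
              Finset.sum_le_sum fun i _ => (hHess (z i) (θ s) v hv).1.le
      · rw [hform, inv_mul_le_iff₀ hcard]
        calc ∑ i ∈ S s, ⟪v, hess (ℓ (z i)) (θ s) v⟫
            ≤ ∑ _i ∈ S s, Lam * ‖v‖ ^ 2 :=
              Finset.sum_le_sum fun i _ => (hHess (z i) (θ s) v hv).2.le
          _ = ((S s).card : ℝ) * (Lam * ‖v‖ ^ 2) := by rw [Finset.sum_const, nsmul_eq_mul]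
  -- the one step contraction
  have hstep : ∀ s, π < s →
      (1 - η s * Lam) * ‖Δ s‖ ≤ ‖Δ (s + 1)‖ ∧
        ‖Δ (s + 1)‖ ≤ (1 - η s * lam) * ‖Δ s‖ := by
    intro s hs
    rw [hΔrec s hs]
    exact step_bound (A s) (hAsym s) hlam hlamLam (hη s).1 (hη s).2 (hAform s) (Δ s)
  have hrate1 : ∀ s, 0 ≤ 1 - η s * Lam := by
    intro s
    have h1 := (hη s).1
    have h2 := (hη s).2
    rw [le_div_iff₀ hLam] at h2
    linarith
  have hrate2 : ∀ s, 0 ≤ 1 - η s * lam := by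
    intro s
    have := hrate1 s
    have h1 := (hη s).1
    nlinarith
  -- induction on T starting from π + 1
  have hmain : ∀ T' : ℕ, π + 1 ≤ T' →
      (η π / (S π).card) * (∏ s ∈ Finset.Ioo π T', (1 - η s * Lam)) *
          ‖gradient (ℓ (z j)) (θ π)‖ ≤ ‖Δ T'‖ ∧
      ‖Δ T'‖ ≤ (η π / (S π).card) * (∏ s ∈ Finset.Ioo π T', (1 - η s * lam)) *
          ‖gradient (ℓ (z j)) (θ π)‖ := by
    intro T' hT'
    induction T', hT' using Nat.le_induction with
    | base =>
        have hIoo : Finset.Ioo π (π + 1) = ∅ := by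
          ext x
          simp only [Finset.mem_Ioo, Finset.notMem_empty, iff_false, not_and, not_lt]
          omega
        have hnorm : ‖Δ (π + 1)‖ =
            (η π / (S π).card) * ‖gradient (ℓ (z j)) (θ π)‖ := by
          rw [hΔinit, norm_smul, Real.norm_eq_abs, abs_of_pos hc0]
        rw [hIoo, Finset.prod_empty, hnorm]
        constructor <;> nlinarith [norm_nonneg (gradient (ℓ (z j)) (θ π))]
    | succ n hn ih =>
        have hπn : π < n := hn
        have hins : Finset.Ioo π (n + 1) = insert n (Finset.Ioo π n) := by
          ext x
          simp only [Finset.mem_Ioo, Finset.mem_insert]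
          omega
        have hnotmem : n ∉ Finset.Ioo π n := by simp
        have hprodL : ∏ s ∈ Finset.Ioo π (n + 1), (1 - η s * Lam) =
            (1 - η n * Lam) * ∏ s ∈ Finset.Ioo π n, (1 - η s * Lam) := by
          rw [hins, Finset.prod_insert hnotmem]
        have hprodl : ∏ s ∈ Finset.Ioo π (n + 1), (1 - η s * lam) =
            (1 - η n * lam) * ∏ s ∈ Finset.Ioo π n, (1 - η s * lam) := by
          rw [hins, Finset.prod_insert hnotmem]
        obtain ⟨ihl, ihu⟩ := ih
        obtain ⟨hsl, hsu⟩ := hstep n hπn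
        constructor
        · rw [hprodL]
          calc η π / ((S π).card : ℝ) *
                ((1 - η n * Lam) * ∏ s ∈ Finset.Ioo π n, (1 - η s * Lam)) *
                ‖gradient (ℓ (z j)) (θ π)‖
              = (1 - η n * Lam) *
                (η π / ((S π).card : ℝ) * (∏ s ∈ Finset.Ioo π n, (1 - η s * Lam)) *
                  ‖gradient (ℓ (z j)) (θ π)‖) := by ring
            _ ≤ (1 - η n * Lam) * ‖Δ n‖ :=
                mul_le_mul_of_nonneg_left ihl (hrate1 n)
            _ ≤ ‖Δ (n + 1)‖ := hsl
        · rw [hprodl]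
          calc ‖Δ (n + 1)‖ ≤ (1 - η n * lam) * ‖Δ n‖ := hsu
            _ ≤ (1 - η n * lam) *
                (η π / ((S π).card : ℝ) * (∏ s ∈ Finset.Ioo π n, (1 - η s * lam)) *
                  ‖gradient (ℓ (z j)) (θ π)‖) :=
                mul_le_mul_of_nonneg_left ihu (hrate2 n)
            _ = η π / ((S π).card : ℝ) *
                ((1 - η n * lam) * ∏ s ∈ Finset.Ioo π n, (1 - η s * lam)) *
                ‖gradient (ℓ (z j)) (θ π)‖ := by ring
  exact hmain T hπT
end
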